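/- Let P be the polytope of vectors x ∈ [0,1]^n satisfying x_1 = 1, w^T x ≥ b, equality constraints Σ_{i ∈ S_k} x_i = ρ_k for k in a set E, inequality constraints Σ_{i ∈ S_k} x_i ≥ ρ_k for k in a set I, and x_i = 0 for i outside the union of buckets, where S_1,...,S_K,S_∞ are pairwise disjoint subsets of {2,...,n} and w ∈ ℝ^n_{>0}, b ∈ ℝ. Then every extreme point x* of P has at most two fractional components, and if it has exactly two they both lie in the same bucket S_h with h ∈ [K], and their values sum to 1. -/

import Mathlib

open Finset

private lemma exists_pos_forall_le {α : Type*} [Fintype α] (c : α → ℝ) (hc : ∀ a, 0 < c a) :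
    ∃ ε > 0, ∀ a, ε ≤ c a := by
  rcases isEmpty_or_nonempty α with h | h
  · exact ⟨1, one_pos, fun a => (IsEmpty.false a).elim⟩
  · obtain ⟨a₀, -, ha₀⟩ := Finset.exists_min_image Finset.univ c
      ⟨Classical.arbitrary α, Finset.mem_univ _⟩
    exact ⟨c a₀, hc a₀, fun a => ha₀ a (Finset.mem_univ a)⟩

private lemma sum_int {m : ℕ} (x : Fin m → ℝ) (T : Finset (Fin m))
    (h : ∀ j ∈ T, x j = 0 ∨ x j = 1) : ∃ z : ℤ, ∑ j ∈ T, x j = z := by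
  classical
  induction T using Finset.induction with
  | empty => exact ⟨0, by simp⟩
  | @insert a T ha ih =>
    obtain ⟨z, hz⟩ := ih (fun j hj => h j (Finset.mem_insert_of_mem hj))
    rcases h a (Finset.mem_insert_self a T) with h0 | h1
    · exact ⟨z, by rw [Finset.sum_insert ha, h0, hz]; ring⟩
    · exact ⟨z + 1, by rw [Finset.sum_insert ha, h1, hz]; push_cast; ring⟩

private def ee {m : ℕ} (p : Fin m) : Fin m → ℝ := fun i => if i = p then 1 else 0

private lemma ee_sum {m : ℕ} (p : Fin m) (T : Finset (Fin m)) :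
    ∑ i ∈ T, ee p i = if p ∈ T then 1 else 0 := by
  simp [ee, Finset.sum_ite_eq']

private lemma ee_wsum {m : ℕ} (w : Fin m → ℝ) (c : ℝ) (p : Fin m) :
    ∑ i, w i * (c * ee p i) = c * w p := by
  simp [ee, mul_ite, Finset.sum_ite_eq', mul_comm]

private lemma pert
    (n K : ℕ) (w : Fin (n + 1) → ℝ) (b : ℝ)
    (S : Fin K → Finset (Fin (n + 1))) (Sinf : Finset (Fin (n + 1)))
    (ρ : Fin K → ℤ)
    (E I : Finset (Fin K)) (hEI : E ∪ I = Finset.univ)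
    (P : Set (Fin (n + 1) → ℝ))
    (hP : P = {x | (∀ i, 0 ≤ x i ∧ x i ≤ 1) ∧ x 0 = 1 ∧
      b ≤ ∑ i, w i * x i ∧
      (∀ k ∈ E, ∑ i ∈ S k, x i = (ρ k : ℝ)) ∧
      (∀ k ∈ I, (ρ k : ℝ) ≤ ∑ i ∈ S k, x i) ∧
      (∀ i : Fin (n + 1), i ≠ 0 → i ∉ Sinf → (∀ k, i ∉ S k) → x i = 0)})
    (x : Fin (n + 1) → ℝ) (hx : x ∈ Set.extremePoints ℝ P)
    (d : Fin (n + 1) → ℝ)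
    (hsupp : ∀ i, d i ≠ 0 → 0 < x i ∧ x i < 1)
    (hbuck : ∀ k : Fin K, (∑ i ∈ S k, x i) = (ρ k : ℝ) → ∑ i ∈ S k, d i = 0)
    (hknap : (∑ i, w i * d i) = 0 ∨ b < ∑ i, w i * x i) :
    d = 0 := by
  classical
  obtain ⟨hxP, hext⟩ := hx
  have hxP' := hxP
  rw [hP] at hxP'
  obtain ⟨hxb, hx0, hxw, hxE, hxI, hxz⟩ := hxP'
  obtain ⟨ε₁, hε₁, hε₁le⟩ := exists_pos_forall_le
    (fun i => if h : d i = 0 then 1 else min (x i) (1 - x i) / |d i|)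
    (by
      intro i
      by_cases h : d i = 0
      · simp [h]
      · have hf := hsupp i h
        simp only [dif_neg h]
        exact div_pos (lt_min hf.1 (by linarith [hf.2])) (abs_pos.2 h))
  obtain ⟨ε₂, hε₂, hε₂le⟩ := exists_pos_forall_le
    (fun k : Fin K => if h : (∑ i ∈ S k, d i) = 0 then 1
      else (∑ i ∈ S k, x i - (ρ k : ℝ)) / |∑ i ∈ S k, d i|)
    (by
      intro k
      by_cases h : (∑ i ∈ S k, d i) = 0
      · simp [h]
      · have hnt : (∑ i ∈ S k, x i) ≠ (ρ k : ℝ) := fun hh => h (hbuck k hh)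
        have hkI : k ∈ I := by
          have : k ∈ E ∪ I := hEI ▸ Finset.mem_univ k
          rcases Finset.mem_union.1 this with hkE | hkI
          · exact absurd (hxE k hkE) hnt
          · exact hkI
        have hle : (ρ k : ℝ) ≤ ∑ i ∈ S k, x i := hxI k hkI
        simp only [dif_neg h]
        refine div_pos ?_ (abs_pos.2 h)
        rcases lt_or_eq_of_le hle with h' | h'
        · linarith
        · exact absurd h'.symm hnt)
  set c3 : ℝ := if h : (∑ i, w i * d i) = 0 then 1
    else (∑ i, w i * x i - b) / |∑ i, w i * d i| with hc3
  have hc3pos : 0 < c3 := by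
    by_cases h : (∑ i, w i * d i) = 0
    · simp [hc3, h]
    · have hlt : b < ∑ i, w i * x i := hknap.resolve_left h
      rw [hc3, dif_neg h]
      exact div_pos (by linarith) (abs_pos.2 h)
  set ε : ℝ := min (min ε₁ ε₂) c3 with hεdef
  have hε : 0 < ε := lt_min (lt_min hε₁ hε₂) hc3pos
  have key : ∀ t A B : ℝ, |t| ≤ ε → A ≠ 0 → ε ≤ B / |A| → |t * A| ≤ B := by
    intro t A B ht hA hB
    rw [abs_mul]
    calc |t| * |A| ≤ (B / |A|) * |A| :=
          mul_le_mul_of_nonneg_right (le_trans ht hB) (abs_nonneg A)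
      _ = B := div_mul_cancel₀ B (abs_ne_zero.2 hA)
  have hd0 : d 0 = 0 := by
    by_contra h
    exact absurd hx0 (ne_of_lt (hsupp 0 h).2)
  have hmem : ∀ t : ℝ, |t| ≤ ε → (fun i => x i + t * d i) ∈ P := by
    intro t ht
    rw [hP]
    refine ⟨?_, ?_, ?_, ?_, ?_, ?_⟩
    · intro i
      show 0 ≤ x i + t * d i ∧ x i + t * d i ≤ 1
      by_cases h : d i = 0
      · simpa [h] using hxb i
      · have hε1 : ε ≤ min (x i) (1 - x i) / |d i| := by
          have := le_trans (min_le_left (min ε₁ ε₂) c3)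
            (le_trans (min_le_left ε₁ ε₂) (hε₁le i))
          simpa only [dif_neg h] using this
        have habs := key t (d i) (min (x i) (1 - x i)) ht h hε1
        have h1 := neg_le_of_abs_le habs
        have h2 := le_of_abs_le habs
        constructor
        · have := min_le_left (x i) (1 - x i); linarith
        · have := min_le_right (x i) (1 - x i); linarith
    · show x 0 + t * d 0 = 1
      simp [hd0, hx0]
    · have hexp : ∑ i, w i * (x i + t * d i) =
          (∑ i, w i * x i) + t * ∑ i, w i * d i := by
        rw [Finset.mul_sum, ← Finset.sum_add_distrib]
        exact Finset.sum_congr rfl fun i _ => by ring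
      show b ≤ ∑ i, w i * (x i + t * d i)
      rw [hexp]
      by_cases h : (∑ i, w i * d i) = 0
      · simpa [h] using hxw
      · have hε3 : ε ≤ (∑ i, w i * x i - b) / |∑ i, w i * d i| := by
          have : ε ≤ c3 := min_le_right _ _
          rwa [hc3, dif_neg h] at this
        have := neg_le_of_abs_le (key t _ _ ht h hε3)
        linarith
    · intro k hkE
      show ∑ i ∈ S k, (x i + t * d i) = (ρ k : ℝ)
      have hexp : ∑ i ∈ S k, (x i + t * d i) =
          (∑ i ∈ S k, x i) + t * ∑ i ∈ S k, d i := by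
        rw [Finset.mul_sum, ← Finset.sum_add_distrib]
      rw [hexp, hbuck k (hxE k hkE), hxE k hkE]; ring
    · intro k hkI
      show (ρ k : ℝ) ≤ ∑ i ∈ S k, (x i + t * d i)
      have hexp : ∑ i ∈ S k, (x i + t * d i) =
          (∑ i ∈ S k, x i) + t * ∑ i ∈ S k, d i := by
        rw [Finset.mul_sum, ← Finset.sum_add_distrib]
      rw [hexp]
      by_cases h : (∑ i ∈ S k, d i) = 0
      · simpa [h] using hxI k hkI
      · have hε2 : ε ≤ (∑ i ∈ S k, x i - (ρ k : ℝ)) / |∑ i ∈ S k, d i| := by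
          have := le_trans (min_le_left (min ε₁ ε₂) c3)
            (le_trans (min_le_right ε₁ ε₂) (hε₂le k))
          simpa only [dif_neg h] using this
        have := neg_le_of_abs_le (key t _ _ ht h hε2)
        linarith
    · intro i hi0 hiinf hik
      show x i + t * d i = 0
      have hxi : x i = 0 := hxz i hi0 hiinf hik
      have hdi : d i = 0 := by
        by_contra h
        exact absurd hxi (ne_of_gt (hsupp i h).1)
      simp [hxi, hdi]
  have h1 : (fun i => x i + ε * d i) ∈ P := hmem ε (by rw [abs_of_pos hε])
  have h2 : (fun i => x i + (-ε) * d i) ∈ P := hmem (-ε) (by rw [abs_neg, abs_of_pos hε])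
  have hseg : x ∈ openSegment ℝ (fun i => x i + ε * d i) (fun i => x i + (-ε) * d i) := by
    refine ⟨1/2, 1/2, by norm_num, by norm_num, by norm_num, ?_⟩
    funext i
    simp only [Pi.add_apply, Pi.smul_apply, smul_eq_mul]
    ring
  have heq := hext h1 h2 hseg
  funext i
  have hi := congrFun heq i
  simp only [Pi.zero_apply]
  have hmul : ε * d i = 0 := by
    have : x i + ε * d i = x i := hi
    linarith
  rcases mul_eq_zero.1 hmul with h | h
  · exact absurd h (ne_of_gt hε)
  · exact h

private lemma pert4
    (n K : ℕ) (w : Fin (n + 1) → ℝ) (b : ℝ)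
    (S : Fin K → Finset (Fin (n + 1))) (Sinf : Finset (Fin (n + 1)))
    (ρ : Fin K → ℤ)
    (E I : Finset (Fin K)) (hEI : E ∪ I = Finset.univ)
    (P : Set (Fin (n + 1) → ℝ))
    (hP : P = {x | (∀ i, 0 ≤ x i ∧ x i ≤ 1) ∧ x 0 = 1 ∧
      b ≤ ∑ i, w i * x i ∧
      (∀ k ∈ E, ∑ i ∈ S k, x i = (ρ k : ℝ)) ∧
      (∀ k ∈ I, (ρ k : ℝ) ≤ ∑ i ∈ S k, x i) ∧
      (∀ i : Fin (n + 1), i ≠ 0 → i ∉ Sinf → (∀ k, i ∉ S k) → x i = 0)})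
    (x : Fin (n + 1) → ℝ) (hx : x ∈ Set.extremePoints ℝ P)
    (p q s u : Fin (n + 1)) (α β γ δ : ℝ)
    (hfp : α ≠ 0 → 0 < x p ∧ x p < 1) (hfq : β ≠ 0 → 0 < x q ∧ x q < 1)
    (hfs : γ ≠ 0 → 0 < x s ∧ x s < 1) (hfu : δ ≠ 0 → 0 < x u ∧ x u < 1)
    (hb : ∀ k : Fin K, (∑ i ∈ S k, x i) = (ρ k : ℝ) →
      α * (if p ∈ S k then (1:ℝ) else 0) + β * (if q ∈ S k then (1:ℝ) else 0)
        + γ * (if s ∈ S k then (1:ℝ) else 0) + δ * (if u ∈ S k then (1:ℝ) else 0) = 0)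
    (hk : α * w p + β * w q + γ * w s + δ * w u = 0 ∨ b < ∑ i, w i * x i) :
    ∀ i, α * ee p i + β * ee q i + γ * ee s i + δ * ee u i = 0 := by
  classical
  have hd := pert n K w b S Sinf ρ E I hEI P hP x hx
    (fun i => α * ee p i + β * ee q i + γ * ee s i + δ * ee u i)
    (by
      intro i hdi
      have h4 : α * ee p i ≠ 0 ∨ β * ee q i ≠ 0 ∨ γ * ee s i ≠ 0 ∨ δ * ee u i ≠ 0 := by
        by_contra hcc
        push_neg at hcc
        apply hdi
        show α * ee p i + β * ee q i + γ * ee s i + δ * ee u i = 0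
        rw [hcc.1, hcc.2.1, hcc.2.2.1, hcc.2.2.2]; ring
      have hone : ∀ (c : ℝ) (pt : Fin (n + 1)), c * ee pt i ≠ 0 →
          (c ≠ 0 ∧ i = pt) := by
        intro c pt hc
        refine ⟨left_ne_zero_of_mul hc, ?_⟩
        by_contra hip
        exact hc (by simp [ee, if_neg hip])
      rcases h4 with h | h | h | h
      · obtain ⟨hc, rfl⟩ := hone _ _ h; exact hfp hc
      · obtain ⟨hc, rfl⟩ := hone _ _ h; exact hfq hc
      · obtain ⟨hc, rfl⟩ := hone _ _ h; exact hfs hc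
      · obtain ⟨hc, rfl⟩ := hone _ _ h; exact hfu hc)
    (by
      intro k htk
      have := hb k htk
      simpa only [Finset.sum_add_distrib, ← Finset.mul_sum, ee_sum] using this)
    (by
      rcases hk with h | h
      · left
        simpa only [mul_add, Finset.sum_add_distrib, ee_wsum] using h
      · right; exact h)
  intro i
  exact congrFun hd i

/-- Extreme points of the bucketed min-knapsack polytope `P(S, ρ)` have at most
two fractional components; if there are exactly two, they lie in a common
bucket `S_h` with `h ∈ [K]` and their values sum to `1`.
Items are indexed by `Fin (n+1)`, with `0` playing the role of item `1`. -/
theorem extreme_point_fractional_structure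
    (n K : ℕ) (w : Fin (n + 1) → ℝ) (hw : ∀ i, 0 < w i) (b : ℝ)
    (S : Fin K → Finset (Fin (n + 1))) (Sinf : Finset (Fin (n + 1)))
    (hS1 : ∀ k, (0 : Fin (n + 1)) ∉ S k) (hSinf1 : (0 : Fin (n + 1)) ∉ Sinf)
    (hdisj : ∀ k k', k ≠ k' → Disjoint (S k) (S k'))
    (hdisjinf : ∀ k, Disjoint (S k) Sinf)
    (ρ : Fin K → ℤ) (hρ : ∀ k, 1 ≤ ρ k)
    (E I : Finset (Fin K)) (hEI : E ∪ I = Finset.univ)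
    (P : Set (Fin (n + 1) → ℝ))
    (hP : P = {x | (∀ i, 0 ≤ x i ∧ x i ≤ 1) ∧ x 0 = 1 ∧
      b ≤ ∑ i, w i * x i ∧
      (∀ k ∈ E, ∑ i ∈ S k, x i = (ρ k : ℝ)) ∧
      (∀ k ∈ I, (ρ k : ℝ) ≤ ∑ i ∈ S k, x i) ∧
      (∀ i : Fin (n + 1), i ≠ 0 → i ∉ Sinf → (∀ k, i ∉ S k) → x i = 0)})
    (x : Fin (n + 1) → ℝ) (hx : x ∈ Set.extremePoints ℝ P) :
    Set.ncard {i | 0 < x i ∧ x i < 1} ≤ 2 ∧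
    (∀ r q : Fin (n + 1), r ≠ q → 0 < x r → x r < 1 → 0 < x q → x q < 1 →
      (∃ h : Fin K, r ∈ S h ∧ q ∈ S h) ∧ x r + x q = 1) := by
  classical
  have hxP := hx.1
  rw [hP] at hxP
  obtain ⟨hxb, hx0, hxw, hxE, hxI, hxz⟩ := hxP
  have P4 := pert4 n K w b S Sinf ρ E I hEI P hP x hx
  have memiff : ∀ (k k' : Fin K) (i : Fin (n + 1)), i ∈ S k → (i ∈ S k' ↔ k' = k) := by
    intro k k' i hik
    constructor
    · intro h
      by_contra hne
      exact (Finset.disjoint_left.1 (hdisj k' k hne) h) hik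
    · rintro rfl; exact hik
  have hInt : ∀ (k : Fin K) (i : Fin (n + 1)), (∑ j ∈ S k, x j) = (ρ k : ℝ) → i ∈ S k →
      0 < x i → x i < 1 → ∃ j, j ∈ S k ∧ j ≠ i ∧ 0 < x j ∧ x j < 1 := by
    intro k i htk hik h1 h2
    by_contra hcon
    push_neg at hcon
    have hall : ∀ j ∈ (S k).erase i, x j = 0 ∨ x j = 1 := by
      intro j hj
      have hjk := Finset.mem_of_mem_erase hj
      have hji := Finset.ne_of_mem_erase hj
      rcases eq_or_lt_of_le (hxb j).1 with h0 | hpos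
      · exact Or.inl h0.symm
      · exact Or.inr (le_antisymm (hxb j).2 (hcon j hjk hji hpos))
    obtain ⟨z, hz⟩ := sum_int x ((S k).erase i) hall
    have hsplit : x i + ∑ j ∈ (S k).erase i, x j = (ρ k : ℝ) := by
      rw [Finset.add_sum_erase _ _ hik]; exact htk
    rw [hz] at hsplit
    have hgt' : (0:ℤ) < ρ k - z := by
      exact_mod_cast (by push_cast; linarith : (0:ℝ) < ((ρ k - z : ℤ) : ℝ))
    have hlt' : ρ k - z < 1 := by
      exact_mod_cast (by push_cast; linarith : ((ρ k - z : ℤ) : ℝ) < 1)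
    omega
  have pairFalse : ∀ (k : Fin K) (p p' : Fin (n + 1)), (∑ j ∈ S k, x j) = (ρ k : ℝ) →
      p ∈ S k → p' ∈ S k → p ≠ p' → (0 < x p ∧ x p < 1) → (0 < x p' ∧ x p' < 1) →
      w p = w p' → False := by
    intro k p p' htk hpk hp'k hpp' hfp hfp' hww
    have h0 := P4 p p' p p 1 (-1) 0 0 (fun _ => hfp) (fun _ => hfp')
      (fun h => absurd rfl h) (fun h => absurd rfl h)
      (by
        intro k' htk'
        have h1 : p ∈ S k' ↔ k' = k := memiff k k' p hpk
        have h2 : p' ∈ S k' ↔ k' = k := memiff k k' p' hp'k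
        by_cases hkk : k' = k
        · rw [if_pos (h1.2 hkk), if_pos (h2.2 hkk)]; ring
        · rw [if_neg (fun hh => hkk (h1.1 hh)), if_neg (fun hh => hkk (h2.1 hh))]; ring)
      (Or.inl (by rw [hww]; ring))
    have hc := h0 p
    rw [show ee p p = 1 from by simp [ee], show ee p' p = 0 from by simp [ee, hpp']] at hc
    norm_num at hc
  have inTight : ∀ r q : Fin (n + 1), r ≠ q → (0 < x r ∧ x r < 1) → (0 < x q ∧ x q < 1) →
      ∃ k, (∑ j ∈ S k, x j) = (ρ k : ℝ) ∧ r ∈ S k := by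
    intro r q hrq hfr hfq
    by_contra hcon
    push_neg at hcon
    by_cases hq : ∃ k, (∑ j ∈ S k, x j) = (ρ k : ℝ) ∧ q ∈ S k
    · obtain ⟨k, htk, hqk⟩ := hq
      obtain ⟨q', hq'k, hq'q, hfq'⟩ := hInt k q htk hqk hfq.1 hfq.2
      have hrk : r ∉ S k := hcon k htk
      have hrq' : r ≠ q' := fun h => hrk (h ▸ hq'k)
      by_cases hww : w q = w q'
      · exact pairFalse k q q' htk hqk hq'k (Ne.symm hq'q) hfq hfq' hww
      · have h0 := P4 q q' r r (w r) (-(w r)) (w q' - w q) 0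
          (fun _ => hfq) (fun _ => hfq') (fun _ => hfr) (fun h => absurd rfl h)
          (by
            intro k' htk'
            have h1 : q ∈ S k' ↔ k' = k := memiff k k' q hqk
            have h2 : q' ∈ S k' ↔ k' = k := memiff k k' q' hq'k
            have h3 : r ∉ S k' := hcon k' htk'
            rw [if_neg h3]
            by_cases hkk : k' = k
            · rw [if_pos (h1.2 hkk), if_pos (h2.2 hkk)]; ring
            · rw [if_neg (fun hh => hkk (h1.1 hh)), if_neg (fun hh => hkk (h2.1 hh))]; ring)
          (Or.inl (by ring))
        have hc := h0 r
        rw [show ee q r = 0 from by simp [ee, hrq], show ee q' r = 0 from by simp [ee, hrq'],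
          show ee r r = 1 from by simp [ee]] at hc
        norm_num at hc
        exact hww (by linarith)
    · push_neg at hq
      have h0 := P4 r q r r (w q) (-(w r)) 0 0
        (fun _ => hfr) (fun _ => hfq) (fun h => absurd rfl h) (fun h => absurd rfl h)
        (by
          intro k' htk'
          rw [if_neg (hcon k' htk'), if_neg (hq k' htk')]; ring)
        (Or.inl (by ring))
      have hc := h0 r
      rw [show ee r r = 1 from by simp [ee], show ee q r = 0 from by simp [ee, hrq]] at hc
      norm_num at hc
      exact (hw q).ne' hc
  have commonTight : ∀ r q : Fin (n + 1), r ≠ q → (0 < x r ∧ x r < 1) → (0 < x q ∧ x q < 1) →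
      ∃ k, (∑ j ∈ S k, x j) = (ρ k : ℝ) ∧ r ∈ S k ∧ q ∈ S k := by
    intro r q hrq hfr hfq
    obtain ⟨k, htk, hrk⟩ := inTight r q hrq hfr hfq
    obtain ⟨k', htk', hqk'⟩ := inTight q r hrq.symm hfq hfr
    by_cases hkk : k = k'
    · exact ⟨k, htk, hrk, hkk ▸ hqk'⟩
    · exfalso
      obtain ⟨r', hr'k, hr'r, hfr'⟩ := hInt k r htk hrk hfr.1 hfr.2
      obtain ⟨q', hq'k', hq'q, hfq'⟩ := hInt k' q htk' hqk' hfq.1 hfq.2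
      have hdlr := Finset.disjoint_left.1 (hdisj k k' hkk)
      have hqr' : q ≠ r' := fun h => hdlr (h ▸ hr'k) hqk'
      have hqq' : q ≠ q' := Ne.symm hq'q
      by_cases h1 : w r = w r'
      · exact pairFalse k r r' htk hrk hr'k (Ne.symm hr'r) hfr hfr' h1
      · by_cases h2 : w q = w q'
        · exact pairFalse k' q q' htk' hqk' hq'k' (Ne.symm hq'q) hfq hfq' h2
        · have h0 := P4 r r' q q' (w q - w q') (-(w q - w q')) (-(w r - w r')) (w r - w r')
            (fun _ => hfr) (fun _ => hfr') (fun _ => hfq) (fun _ => hfq')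
            (by
              intro k'' htk''
              have e1 : r ∈ S k'' ↔ k'' = k := memiff k k'' r hrk
              have e2 : r' ∈ S k'' ↔ k'' = k := memiff k k'' r' hr'k
              have e3 : q ∈ S k'' ↔ k'' = k' := memiff k' k'' q hqk'
              have e4 : q' ∈ S k'' ↔ k'' = k' := memiff k' k'' q' hq'k'
              by_cases ha : k'' = k <;> by_cases hb' : k'' = k'
              · exact absurd (ha.symm.trans hb') hkk
              · rw [if_pos (e1.2 ha), if_pos (e2.2 ha),
                  if_neg (fun hh => hb' (e3.1 hh)), if_neg (fun hh => hb' (e4.1 hh))]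
                ring
              · rw [if_neg (fun hh => ha (e1.1 hh)), if_neg (fun hh => ha (e2.1 hh)),
                  if_pos (e3.2 hb'), if_pos (e4.2 hb')]
                ring
              · rw [if_neg (fun hh => ha (e1.1 hh)), if_neg (fun hh => ha (e2.1 hh)),
                  if_neg (fun hh => hb' (e3.1 hh)), if_neg (fun hh => hb' (e4.1 hh))]
                ring)
            (Or.inl (by ring))
          have hc := h0 q
          rw [show ee r q = 0 from by simp [ee, Ne.symm hrq],
            show ee r' q = 0 from by simp [ee, hqr'],
            show ee q q = 1 from by simp [ee],
            show ee q' q = 0 from by simp [ee, hqq']] at hc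
          norm_num at hc
          exact h1 (by linarith)
  have no3 : ∀ r q s : Fin (n + 1), r ≠ q → r ≠ s → q ≠ s →
      (0 < x r ∧ x r < 1) → (0 < x q ∧ x q < 1) → (0 < x s ∧ x s < 1) → False := by
    intro r q s hrq hrs hqs hfr hfq hfs
    obtain ⟨k, htk, hrk, hqk⟩ := commonTight r q hrq hfr hfq
    obtain ⟨k', htk', hrk', hsk'⟩ := commonTight r s hrs hfr hfs
    have hkk : k' = k := ((memiff k' k r hrk').1 hrk).symm
    subst hkk
    by_cases hww : w r = w q
    · exact pairFalse k' r q htk hrk hqk hrq hfr hfq hww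
    · have h0 := P4 r q s s (w q - w s) (w s - w r) (w r - w q) 0
        (fun _ => hfr) (fun _ => hfq) (fun _ => hfs) (fun h => absurd rfl h)
        (by
          intro k'' htk''
          have e1 : r ∈ S k'' ↔ k'' = k' := memiff k' k'' r hrk
          have e2 : q ∈ S k'' ↔ k'' = k' := memiff k' k'' q hqk
          have e3 : s ∈ S k'' ↔ k'' = k' := memiff k' k'' s hsk'
          by_cases ha : k'' = k'
          · rw [if_pos (e1.2 ha), if_pos (e2.2 ha), if_pos (e3.2 ha)]; ring
          · rw [if_neg (fun hh => ha (e1.1 hh)), if_neg (fun hh => ha (e2.1 hh)),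
              if_neg (fun hh => ha (e3.1 hh))]
            ring)
        (Or.inl (by ring))
      have hc := h0 s
      rw [show ee r s = 0 from by simp [ee, Ne.symm hrs],
        show ee q s = 0 from by simp [ee, Ne.symm hqs],
        show ee s s = 1 from by simp [ee]] at hc
      norm_num at hc
      exact hww (by linarith)
  have hcard : Set.ncard {i | 0 < x i ∧ x i < 1} ≤ 2 := by
    by_contra hgt
    push_neg at hgt
    obtain ⟨a, b', c, ha, hb', hc, hab, hac, hbc⟩ :=
      (Set.two_lt_ncard_iff (Set.toFinite _)).1 hgt
    exact no3 a b' c hab hac hbc ha hb' hc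
  refine ⟨hcard, ?_⟩
  intro r q hrq h1 h2 h3 h4
  obtain ⟨k, htk, hrk, hqk⟩ := commonTight r q hrq ⟨h1, h2⟩ ⟨h3, h4⟩
  refine ⟨⟨k, hrk, hqk⟩, ?_⟩
  have hsub : ({r, q} : Set (Fin (n + 1))) ⊆ {i | 0 < x i ∧ x i < 1} := by
    intro j hj
    simp only [Set.mem_insert_iff, Set.mem_singleton_iff] at hj
    rcases hj with rfl | rfl
    · exact ⟨h1, h2⟩
    · exact ⟨h3, h4⟩
  have hset : ({r, q} : Set (Fin (n + 1))) = {i | 0 < x i ∧ x i < 1} :=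
    Set.eq_of_subset_of_ncard_le hsub (by rw [Set.ncard_pair hrq]; exact hcard)
      (Set.toFinite _)
  have hall : ∀ j ∈ ((S k).erase r).erase q, x j = 0 ∨ x j = 1 := by
    intro j hj
    have hjq : j ≠ q := Finset.ne_of_mem_erase hj
    have hj' := Finset.mem_of_mem_erase hj
    have hjr : j ≠ r := Finset.ne_of_mem_erase hj'
    rcases eq_or_lt_of_le (hxb j).1 with h0 | hpos
    · exact Or.inl h0.symm
    · right
      by_contra hne
      have hlt : x j < 1 := lt_of_le_of_ne (hxb j).2 hne
      have hjmem : j ∈ {i | 0 < x i ∧ x i < 1} := ⟨hpos, hlt⟩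
      rw [← hset] at hjmem
      simp only [Set.mem_insert_iff, Set.mem_singleton_iff] at hjmem
      rcases hjmem with rfl | rfl
      · exact hjr rfl
      · exact hjq rfl
  obtain ⟨z, hz⟩ := sum_int x (((S k).erase r).erase q) hall
  have hqer : q ∈ (S k).erase r := Finset.mem_erase.2 ⟨Ne.symm hrq, hqk⟩
  have e1 : x q + ∑ j ∈ ((S k).erase r).erase q, x j = ∑ j ∈ (S k).erase r, x j :=
    Finset.add_sum_erase _ _ hqer
  have e2 : x r + ∑ j ∈ (S k).erase r, x j = ∑ j ∈ S k, x j :=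
    Finset.add_sum_erase _ _ hrk
  rw [hz] at e1
  rw [htk] at e2
  have hv : x r + x q = ((ρ k - z : ℤ) : ℝ) := by push_cast; linarith
  have hgt0 : (0:ℤ) < ρ k - z := by
    exact_mod_cast (show (0:ℝ) < ((ρ k - z : ℤ) : ℝ) by rw [← hv]; linarith)
  have hlt2 : ρ k - z < 2 := by
    exact_mod_cast (show ((ρ k - z : ℤ) : ℝ) < 2 by rw [← hv]; linarith)
  have hone : ρ k - z = 1 := by omega
  rw [hv, hone]
  norm_num
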